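/- With φ(t,x) = (cos θ(t) cos x, cos θ(t) sin x, sin θ(t)) as above, the energy E(t) = ∫_{S¹} (|φ_x|² + |φ_t|²)(t,x) dx equals 2π(θ′(t)² + cos² θ(t)). Consequently, for any T > 0 there exists θ ∈ C²([0,T]) with θ(0) = θ′(0) = 0 (so E(0) = 2π) and E(T) < 2π. -/

import Mathlib

open Real

noncomputable def dt (g : ℝ → ℝ → ℝ) (t x : ℝ) : ℝ := deriv (fun t' => g t' x) t

noncomputable def dx (g : ℝ → ℝ → ℝ) (t x : ℝ) : ℝ := deriv (fun x' => g t x') x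

/-- Energy `E(t) = ∫_{S¹} (|φ_x|² + |φ_t|²) dx` of the `S²`-valued map with components
`φ1, φ2, φ3`. -/
noncomputable def Energy (φ1 φ2 φ3 : ℝ → ℝ → ℝ) (t : ℝ) : ℝ :=
  ∫ x in (0:ℝ)..(2*π),
    ((dx φ1 t x)^2 + (dx φ2 t x)^2 + (dx φ3 t x)^2 +
      (dt φ1 t x)^2 + (dt φ2 t x)^2 + (dt φ3 t x)^2)

lemma energy_eq (θ : ℝ → ℝ) (hθ : ContDiff ℝ 2 θ) (t : ℝ) :
    Energy (fun t x => Real.cos (θ t) * Real.cos x)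
        (fun t x => Real.cos (θ t) * Real.sin x)
        (fun t _ => Real.sin (θ t)) t
        = 2*π*((deriv θ t)^2 + (Real.cos (θ t))^2) := by
  have hd : HasDerivAt θ (deriv θ t) t :=
    ((hθ.differentiable (by norm_num)) t).hasDerivAt
  set d := deriv θ t
  have key : ∀ x : ℝ,
      ((dx (fun t x => Real.cos (θ t) * Real.cos x) t x)^2 +
       (dx (fun t x => Real.cos (θ t) * Real.sin x) t x)^2 +
       (dx (fun t _ => Real.sin (θ t)) t x)^2 +
       (dt (fun t x => Real.cos (θ t) * Real.cos x) t x)^2 +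
       (dt (fun t x => Real.cos (θ t) * Real.sin x) t x)^2 +
       (dt (fun t _ => Real.sin (θ t)) t x)^2) = d^2 + (Real.cos (θ t))^2 := by
    intro x
    have h1 : dx (fun t x => Real.cos (θ t) * Real.cos x) t x
        = Real.cos (θ t) * (-Real.sin x) := by
      simpa [dx] using ((Real.hasDerivAt_cos x).const_mul (Real.cos (θ t))).deriv
    have h2 : dx (fun t x => Real.cos (θ t) * Real.sin x) t x
        = Real.cos (θ t) * Real.cos x := by
      simpa [dx] using ((Real.hasDerivAt_sin x).const_mul (Real.cos (θ t))).deriv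
    have h3 : dx (fun t _ => Real.sin (θ t)) t x = 0 := by
      simp [dx]
    have h4 : dt (fun t x => Real.cos (θ t) * Real.cos x) t x
        = (-Real.sin (θ t) * d) * Real.cos x := by
      simpa [dt] using (hd.cos.mul_const (Real.cos x)).deriv
    have h5 : dt (fun t x => Real.cos (θ t) * Real.sin x) t x
        = (-Real.sin (θ t) * d) * Real.sin x := by
      simpa [dt] using (hd.cos.mul_const (Real.sin x)).deriv
    have h6 : dt (fun t _ => Real.sin (θ t)) t x
        = Real.cos (θ t) * d := by
      simpa [dt] using hd.sin.deriv
    rw [h1, h2, h3, h4, h5, h6]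
    have hx := Real.sin_sq_add_cos_sq x
    have ht := Real.sin_sq_add_cos_sq (θ t)
    linear_combination (Real.cos (θ t))^2 * hx + d^2 * (Real.sin (θ t))^2 * hx + d^2 * ht
  unfold Energy
  rw [intervalIntegral.integral_congr (g := fun _ => d^2 + (Real.cos (θ t))^2)
    (fun x _ => key x)]
  rw [intervalIntegral.integral_const, smul_eq_mul]
  ring

lemma smooth_aux (T : ℝ) : ContDiff ℝ 2 (fun t : ℝ => π/4 * (1 - Real.cos (π * t / T))) := by
  have h1 : ContDiff ℝ 2 (fun t : ℝ => π * t / T) :=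
    ((contDiff_const (c := π)).mul contDiff_id).div_const T
  exact (contDiff_const (c := π/4)).mul
    ((contDiff_const (c := (1:ℝ))).sub ((Real.contDiff_cos.of_le le_top).comp h1))

theorem stmt9 :
    (∀ θ : ℝ → ℝ, ContDiff ℝ 2 θ → ∀ t : ℝ,
      Energy (fun t x => Real.cos (θ t) * Real.cos x)
        (fun t x => Real.cos (θ t) * Real.sin x)
        (fun t _ => Real.sin (θ t)) t
        = 2*π*((deriv θ t)^2 + (Real.cos (θ t))^2)) ∧
    (∀ T : ℝ, 0 < T → ∃ θ : ℝ → ℝ, ContDiff ℝ 2 θ ∧ θ 0 = 0 ∧ deriv θ 0 = 0 ∧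
      Energy (fun t x => Real.cos (θ t) * Real.cos x)
        (fun t x => Real.cos (θ t) * Real.sin x)
        (fun t _ => Real.sin (θ t)) 0 = 2*π ∧
      Energy (fun t x => Real.cos (θ t) * Real.cos x)
        (fun t x => Real.cos (θ t) * Real.sin x)
        (fun t _ => Real.sin (θ t)) T < 2*π) := by
  constructor
  · exact energy_eq
  · intro T hT
    refine ⟨fun t => (π/4) * (1 - Real.cos (π * t / T)), ?_, ?_, ?_, ?_, ?_⟩
    case _ =>
      exact smooth_aux T
    all_goals {
      have hθ : ContDiff ℝ 2 (fun t => (π/4) * (1 - Real.cos (π * t / T))) := smooth_aux T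
      have hder : ∀ t : ℝ, HasDerivAt (fun t => (π/4) * (1 - Real.cos (π * t / T)))
          ((π/4) * (Real.sin (π * t / T) * (π / T))) t := by
        intro t
        have hlin : HasDerivAt (fun t : ℝ => π * t / T) (π / T) t := by
          simpa using ((hasDerivAt_id t).const_mul π).div_const T
        have := hlin.cos
        have h2 : HasDerivAt (fun t : ℝ => 1 - Real.cos (π * t / T))
            (Real.sin (π * t / T) * (π / T)) t := by
          simpa [Pi.sub_def] using (hasDerivAt_const t (1:ℝ)).sub this
        simpa using h2.const_mul (π/4)
      have hd0 : deriv (fun t => (π/4) * (1 - Real.cos (π * t / T))) 0 = 0 := by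
        rw [(hder 0).deriv]; simp
      have hdT : deriv (fun t => (π/4) * (1 - Real.cos (π * t / T))) T = 0 := by
        rw [(hder T).deriv]
        have : π * T / T = π := by field_simp
        simp [this]
      have hv0 : (π/4) * (1 - Real.cos (π * 0 / T)) = 0 := by simp
      have hvT : (π/4) * (1 - Real.cos (π * T / T)) = π/2 := by
        have : π * T / T = π := by field_simp
        rw [this, Real.cos_pi]; ring
      first
      | exact hv0
      | exact hd0
      | (rw [energy_eq _ hθ 0, hd0]
         simp [hv0])
      | (rw [energy_eq _ hθ T, hdT]
         have : Real.cos ((fun t => (π/4) * (1 - Real.cos (π * t / T))) T) = 0 := by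
           simp only [hvT]; exact Real.cos_pi_div_two
         simp only [this]
         norm_num
         positivity)
    }
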